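/- arXiv:0909.3479 — 2 statements merged into one kernel-verified Lean document; each statement's English description precedes it below -/
import Mathlib

section
/- Let S be a weak*-closed unital subspace of B(H) and π a weak*-continuous functional on S with ‖π‖ = 1. Suppose that for every weak*-continuous functional ρ on S, every ε ∈ (0,1), and every pair of vectors x, y there exist vectors x', y' with ‖π_err − [x'⊗y']‖ < ε, ‖x'‖, ‖y'‖ < (1+ε)‖π_err‖^{1/2} where π_err = ρ, and ‖[x'⊗y]‖ < ε, ‖[x⊗y']‖ < ε. Then, given α ∈ (0,1), one can construct sequences (x_k), (y_k) in H with x₀ = y₀ = 0 satisfying: ‖π − [x_k ⊗ y_k]‖ < α^{2k}, ‖x_k‖, ‖y_k‖ < (1+α)(1 + α + ⋯ + α^{k−1}), and ‖x_k − x_{k−1}‖, ‖y_k − y_{k−1}‖ < (1+α)α^{k−1}; consequently (x_k), (y_k) converge to vectors x, y with π = [x ⊗ y], ‖x‖ ≤ (1+α)/(1−α), and ‖y‖ ≤ (1+α)/(1−α). -/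
open scoped ComplexInnerProductSpace
open Filter Topology

set_option maxHeartbeats 2000000

/-- The iterative "dual algebra" construction. Let `S` be a (weak*-, in particular
norm-) closed unital subspace of `B(H)`, `ten x y` the functional `A ↦ ⟪Ax, y⟫` on `S`,
and `π` a functional of norm `1`.  If every functional `ρ` on `S` admits, for every
`ε ∈ (0,1)` and vectors `x, y`, an approximation `[x'⊗y']` with
`‖ρ − [x'⊗y']‖ < ε`, `‖x'‖, ‖y'‖ < (1+ε)‖ρ‖^{1/2}`, `‖[x'⊗y]‖ < ε`, `‖[x⊗y']‖ < ε`,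
then for every `α ∈ (0,1)` there are sequences `(x_k), (y_k)` starting at `0` with
`‖π − [x_k⊗y_k]‖ < α^{2k}`, `‖x_k‖, ‖y_k‖ < (1+α)(1+α+⋯+α^{k-1})`,
`‖x_k − x_{k-1}‖, ‖y_k − y_{k-1}‖ < (1+α)α^{k-1}`, which converge to vectors `x, y` with
`π = [x⊗y]` and `‖x‖, ‖y‖ ≤ (1+α)/(1−α)`. -/
theorem stmt7 {H : Type*} [NormedAddCommGroup H] [InnerProductSpace ℂ H] [CompleteSpace H]
    (S : Submodule ℂ (H →L[ℂ] H))
    (hclosed : IsClosed (S : Set (H →L[ℂ] H)))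
    (hone : (1 : H →L[ℂ] H) ∈ S)
    (ten : H → H → StrongDual ℂ S)
    (hten : ∀ (x y : H) (A : S), ten x y A = ⟪(A : H →L[ℂ] H) x, y⟫)
    (π : StrongDual ℂ S) (hπ : ‖π‖ = 1)
    (happrox : ∀ (ρ : StrongDual ℂ S) (ε : ℝ), 0 < ε → ε < 1 → ∀ x y : H,
      ∃ x' y' : H,
        ‖ρ - ten x' y'‖ < ε ∧
        ‖x'‖ < (1 + ε) * Real.sqrt ‖ρ‖ ∧ ‖y'‖ < (1 + ε) * Real.sqrt ‖ρ‖ ∧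
        ‖ten x' y‖ < ε ∧ ‖ten x y'‖ < ε)
    (α : ℝ) (hα0 : 0 < α) (hα1 : α < 1) :
    ∃ x y : ℕ → H, x 0 = 0 ∧ y 0 = 0 ∧
      (∀ k : ℕ, 1 ≤ k →
        ‖π - ten (x k) (y k)‖ < α ^ (2 * k) ∧
        ‖x k‖ < (1 + α) * ∑ i ∈ Finset.range k, α ^ i ∧
        ‖y k‖ < (1 + α) * ∑ i ∈ Finset.range k, α ^ i ∧
        ‖x k - x (k - 1)‖ < (1 + α) * α ^ (k - 1) ∧
        ‖y k - y (k - 1)‖ < (1 + α) * α ^ (k - 1)) ∧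
      ∃ xl yl : H, Tendsto x atTop (𝓝 xl) ∧ Tendsto y atTop (𝓝 yl) ∧
        π = ten xl yl ∧ ‖xl‖ ≤ (1 + α) / (1 - α) ∧ ‖yl‖ ≤ (1 + α) / (1 - α) := by
  classical
  have ten_add : ∀ a b c d : H,
      ten (a + b) (c + d) = ten a c + ten b c + ten a d + ten b d := by
    intro a b c d
    ext A
    simp only [hten, ContinuousLinearMap.add_apply, map_add, inner_add_left, inner_add_right]
    ring
  have ten_zero : ten (0 : H) (0 : H) = 0 := by
    ext A
    simp [hten]
  have ε_pos : ∀ k : ℕ, 0 < α ^ (2 * k + 2) / 3 := fun k => by positivity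
  have ε_lt_α : ∀ k : ℕ, α ^ (2 * k + 2) / 3 < α := by
    intro k
    have h1 : α ^ (2 * k + 2) ≤ α ^ 1 :=
      pow_le_pow_of_le_one hα0.le hα1.le (by omega)
    simp only [pow_one] at h1
    linarith
  have ε_lt_one : ∀ k, α ^ (2 * k + 2) / 3 < 1 := fun k => lt_trans (ε_lt_α k) hα1
  have happrox' : ∀ (k : ℕ) (ρ : StrongDual ℂ S) (x y : H),
      ∃ x' y' : H, ‖ρ - ten x' y'‖ < α ^ (2 * k + 2) / 3 ∧
        ‖x'‖ < (1 + α ^ (2 * k + 2) / 3) * Real.sqrt ‖ρ‖ ∧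
        ‖y'‖ < (1 + α ^ (2 * k + 2) / 3) * Real.sqrt ‖ρ‖ ∧
        ‖ten x' y‖ < α ^ (2 * k + 2) / 3 ∧ ‖ten x y'‖ < α ^ (2 * k + 2) / 3 :=
    fun k ρ x y => happrox ρ _ (ε_pos k) (ε_lt_one k) x y
  choose fx fy hf using happrox'
  obtain ⟨x, y, hx0, hy0, hxs, hys⟩ :
      ∃ x y : ℕ → H, x 0 = 0 ∧ y 0 = 0 ∧
        (∀ k, x (k + 1) = x k + fx k (π - ten (x k) (y k)) (x k) (y k)) ∧
        (∀ k, y (k + 1) = y k + fy k (π - ten (x k) (y k)) (x k) (y k)) := by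
    let seq : ℕ → H × H := fun k => Nat.rec ((0 : H), (0 : H))
      (fun k p => (p.1 + fx k (π - ten p.1 p.2) p.1 p.2,
                   p.2 + fy k (π - ten p.1 p.2) p.1 p.2)) k
    exact ⟨fun k => (seq k).1, fun k => (seq k).2, rfl, rfl,
      fun k => rfl, fun k => rfl⟩
  -- the main inductive step
  have step : ∀ k, ‖π - ten (x k) (y k)‖ ≤ α ^ (2 * k) →
      ‖x (k + 1) - x k‖ < (1 + α) * α ^ k ∧ ‖y (k + 1) - y k‖ < (1 + α) * α ^ k ∧
      ‖π - ten (x (k + 1)) (y (k + 1))‖ < α ^ (2 * k + 2) := by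
    intro k hk
    obtain ⟨h1, h2, h3, h4, h5⟩ := hf k (π - ten (x k) (y k)) (x k) (y k)
    set x' := fx k (π - ten (x k) (y k)) (x k) (y k) with hx'
    set y' := fy k (π - ten (x k) (y k)) (x k) (y k) with hy'
    have hsqrt : Real.sqrt ‖π - ten (x k) (y k)‖ ≤ α ^ k := by
      have h2k : α ^ (2 * k) = (α ^ k) ^ 2 := by rw [← pow_mul, mul_comm]
      rw [h2k] at hk
      calc Real.sqrt ‖π - ten (x k) (y k)‖ ≤ Real.sqrt ((α ^ k) ^ 2) :=
            Real.sqrt_le_sqrt hk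
        _ = α ^ k := Real.sqrt_sq (by positivity)
    have hε : α ^ (2 * k + 2) / 3 < α := ε_lt_α k
    have hεpos : 0 < α ^ (2 * k + 2) / 3 := ε_pos k
    have hkpos : (0 : ℝ) < α ^ k := pow_pos hα0 k
    have hxinc : ‖x (k + 1) - x k‖ < (1 + α) * α ^ k := by
      rw [hxs k, ← hx', add_sub_cancel_left]
      have ha : (1 + α ^ (2 * k + 2) / 3) * Real.sqrt ‖π - ten (x k) (y k)‖
          ≤ (1 + α ^ (2 * k + 2) / 3) * α ^ k :=
        mul_le_mul_of_nonneg_left hsqrt (by linarith)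
      have hb : (1 + α ^ (2 * k + 2) / 3) * α ^ k < (1 + α) * α ^ k :=
        mul_lt_mul_of_pos_right (by linarith) hkpos
      linarith [h2]
    have hyinc : ‖y (k + 1) - y k‖ < (1 + α) * α ^ k := by
      rw [hys k, ← hy', add_sub_cancel_left]
      have ha : (1 + α ^ (2 * k + 2) / 3) * Real.sqrt ‖π - ten (x k) (y k)‖
          ≤ (1 + α ^ (2 * k + 2) / 3) * α ^ k :=
        mul_le_mul_of_nonneg_left hsqrt (by linarith)
      have hb : (1 + α ^ (2 * k + 2) / 3) * α ^ k < (1 + α) * α ^ k :=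
        mul_lt_mul_of_pos_right (by linarith) hkpos
      linarith [h3]
    refine ⟨hxinc, hyinc, ?_⟩
    have hdecomp : π - ten (x (k + 1)) (y (k + 1)) =
        ((π - ten (x k) (y k)) - ten x' y') - ten x' (y k) - ten (x k) y' := by
      rw [hxs k, hys k, ← hx', ← hy', ten_add]
      abel
    rw [hdecomp]
    calc ‖((π - ten (x k) (y k)) - ten x' y') - ten x' (y k) - ten (x k) y'‖
        ≤ ‖((π - ten (x k) (y k)) - ten x' y') - ten x' (y k)‖ + ‖ten (x k) y'‖ := by
          have := norm_sub_le (((π - ten (x k) (y k)) - ten x' y') - ten x' (y k)) (ten (x k) y')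
          exact this
      _ ≤ ‖(π - ten (x k) (y k)) - ten x' y'‖ + ‖ten x' (y k)‖ + ‖ten (x k) y'‖ := by
          have := norm_sub_le ((π - ten (x k) (y k)) - ten x' y') (ten x' (y k))
          linarith
      _ < α ^ (2 * k + 2) / 3 + α ^ (2 * k + 2) / 3 + α ^ (2 * k + 2) / 3 :=
          add_lt_add (add_lt_add h1 h4) h5
      _ = α ^ (2 * k + 2) := by ring
  have main : ∀ k, ‖π - ten (x k) (y k)‖ ≤ α ^ (2 * k) := by
    intro k
    induction k with
    | zero =>
      simp [hx0, hy0, ten_zero, hπ]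
      exact le_of_eq (by rw [show π - 0 = π from sub_zero π, hπ])
    | succ k ih =>
      have := (step k ih).2.2
      calc ‖π - ten (x (k + 1)) (y (k + 1))‖ ≤ α ^ (2 * k + 2) := this.le
        _ = α ^ (2 * (k + 1)) := by ring_nf
  have inc : ∀ k, ‖x (k + 1) - x k‖ < (1 + α) * α ^ k ∧
      ‖y (k + 1) - y k‖ < (1 + α) * α ^ k :=
    fun k => ⟨(step k (main k)).1, (step k (main k)).2.1⟩
  have xnorm : ∀ k, 1 ≤ k → ‖x k‖ < (1 + α) * ∑ i ∈ Finset.range k, α ^ i := by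
    intro k hk
    have hxk : x k = ∑ i ∈ Finset.range k, (x (i + 1) - x i) := by
      rw [Finset.sum_range_sub, hx0, sub_zero]
    rw [hxk, Finset.mul_sum]
    calc ‖∑ i ∈ Finset.range k, (x (i + 1) - x i)‖
        ≤ ∑ i ∈ Finset.range k, ‖x (i + 1) - x i‖ := norm_sum_le _ _
      _ < ∑ i ∈ Finset.range k, (1 + α) * α ^ i :=
          Finset.sum_lt_sum_of_nonempty (Finset.nonempty_range_iff.2 (by omega))
            (fun i _ => (inc i).1)
  have ynorm : ∀ k, 1 ≤ k → ‖y k‖ < (1 + α) * ∑ i ∈ Finset.range k, α ^ i := by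
    intro k hk
    have hyk : y k = ∑ i ∈ Finset.range k, (y (i + 1) - y i) := by
      rw [Finset.sum_range_sub, hy0, sub_zero]
    rw [hyk, Finset.mul_sum]
    calc ‖∑ i ∈ Finset.range k, (y (i + 1) - y i)‖
        ≤ ∑ i ∈ Finset.range k, ‖y (i + 1) - y i‖ := norm_sum_le _ _
      _ < ∑ i ∈ Finset.range k, (1 + α) * α ^ i :=
          Finset.sum_lt_sum_of_nonempty (Finset.nonempty_range_iff.2 (by omega))
            (fun i _ => (inc i).2)
  have hcx : CauchySeq x :=
    cauchySeq_of_le_geometric α (1 + α) hα1 (fun n => by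
      rw [dist_eq_norm, norm_sub_rev]; exact (inc n).1.le)
  have hcy : CauchySeq y :=
    cauchySeq_of_le_geometric α (1 + α) hα1 (fun n => by
      rw [dist_eq_norm, norm_sub_rev]; exact (inc n).2.le)
  obtain ⟨xl, hxl⟩ := cauchySeq_tendsto_of_complete hcx
  obtain ⟨yl, hyl⟩ := cauchySeq_tendsto_of_complete hcy
  have hsum_le : ∑' (i : ℕ), α ^ i = (1 - α)⁻¹ := tsum_geometric_of_lt_one hα0.le hα1
  have hgeo : ∀ k : ℕ, ∑ i ∈ Finset.range k, α ^ i ≤ (1 - α)⁻¹ := by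
    intro k
    have := Summable.sum_le_tsum (Finset.range k) (fun i _ => by positivity)
      (summable_geometric_of_lt_one hα0.le hα1)
    rwa [hsum_le] at this
  have hbound : ∀ k, ‖x k‖ ≤ (1 + α) / (1 - α) := by
    intro k
    rcases Nat.eq_zero_or_pos k with h | h
    · rw [h, hx0, norm_zero]
      exact div_nonneg (by linarith) (by linarith)
    · have h1 := (xnorm k h).le
      have h2 := hgeo k
      calc ‖x k‖ ≤ (1 + α) * ∑ i ∈ Finset.range k, α ^ i := h1
        _ ≤ (1 + α) * (1 - α)⁻¹ := by
            have : (0 : ℝ) ≤ 1 + α := by linarith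
            exact mul_le_mul_of_nonneg_left h2 this
        _ = (1 + α) / (1 - α) := by rw [div_eq_mul_inv]
  have hbound' : ∀ k, ‖y k‖ ≤ (1 + α) / (1 - α) := by
    intro k
    rcases Nat.eq_zero_or_pos k with h | h
    · rw [h, hy0, norm_zero]
      exact div_nonneg (by linarith) (by linarith)
    · have h1 := (ynorm k h).le
      have h2 := hgeo k
      calc ‖y k‖ ≤ (1 + α) * ∑ i ∈ Finset.range k, α ^ i := h1
        _ ≤ (1 + α) * (1 - α)⁻¹ := by
            have : (0 : ℝ) ≤ 1 + α := by linarith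
            exact mul_le_mul_of_nonneg_left h2 this
        _ = (1 + α) / (1 - α) := by rw [div_eq_mul_inv]
  have hlimeq : π = ten xl yl := by
    ext A
    have h1 : Tendsto (fun k => (⟪(A : H →L[ℂ] H) (x k), y k⟫ : ℂ)) atTop
        (𝓝 (⟪(A : H →L[ℂ] H) xl, yl⟫ : ℂ)) :=
      Tendsto.inner (((A : H →L[ℂ] H).continuous.tendsto xl).comp hxl) hyl
    have h1' : Tendsto (fun k => ten (x k) (y k) A) atTop (𝓝 (ten xl yl A)) := by
      simp only [hten]; exact h1
    have h2 : Tendsto (fun k => ten (x k) (y k) A - π A) atTop (𝓝 0) := by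
      have hg : Tendsto (fun k : ℕ => α ^ (2 * k) * ‖A‖) atTop (𝓝 0) := by
        have : Tendsto (fun k : ℕ => (α ^ 2) ^ k * ‖A‖) atTop (𝓝 (0 * ‖A‖)) :=
          (tendsto_pow_atTop_nhds_zero_of_lt_one (by positivity)
            (by nlinarith)).mul_const _
        simpa [pow_mul] using this
      refine squeeze_zero_norm (fun k => ?_) hg
      calc ‖ten (x k) (y k) A - π A‖ = ‖(π - ten (x k) (y k)) A‖ := by
              rw [ContinuousLinearMap.sub_apply, norm_sub_rev]
          _ ≤ ‖π - ten (x k) (y k)‖ * ‖A‖ := (π - ten (x k) (y k)).le_opNorm A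
          _ ≤ α ^ (2 * k) * ‖A‖ := by
              have := main k
              have hA : (0 : ℝ) ≤ ‖A‖ := norm_nonneg _
              nlinarith
    have h2' : Tendsto (fun k => ten (x k) (y k) A) atTop (𝓝 (π A)) := by
      have := h2.add_const (π A)
      simpa using this
    exact (tendsto_nhds_unique h2' h1')
  refine ⟨x, y, hx0, hy0, ?_, xl, yl, hxl, hyl, hlimeq,
    le_of_tendsto' hxl.norm hbound, le_of_tendsto' hyl.norm hbound'⟩
  intro k hk
  obtain ⟨j, rfl⟩ : ∃ j, k = j + 1 := ⟨k - 1, by omega⟩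
  have hmain : ‖π - ten (x (j + 1)) (y (j + 1))‖ < α ^ (2 * (j + 1)) := by
    have := (step j (main j)).2.2
    calc ‖π - ten (x (j + 1)) (y (j + 1))‖ < α ^ (2 * j + 2) := this
      _ = α ^ (2 * (j + 1)) := by ring_nf
  refine ⟨hmain, xnorm _ hk, ynorm _ hk, ?_, ?_⟩
  · simpa using (inc j).1
  · simpa using (inc j).2
end

section
/- Let S₁,...,Sₙ be isometries on H with pairwise orthogonal ranges, S the algebra they generate with identity, S₀ the ideal generated by the Sᵢ. If z is a unit vector in S[x] ⊖ S₀[x] for some vector x, then (S_w z, z) = 0 for every nonempty word w, and moreover (S_u z, S_v z) = 0 for all distinct words u, v; hence z is a wandering vector. -/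
open scoped ComplexInnerProductSpace

/-- If `z` is a unit vector in `S[x] ⊖ S₀[x]` (i.e. `z` lies in the closed span of
`{S_w x : w}` and is orthogonal to the closed span of `{S_w x : w ≠ ∅}`), then
`⟪S_w z, z⟫ = 0` for every nonempty word `w`, `⟪S_u z, S_v z⟫ = 0` for all distinct
words `u, v`, and hence `z` is a wandering vector. -/
theorem stmt9 {H : Type*} [NormedAddCommGroup H] [InnerProductSpace ℂ H] [CompleteSpace H]
    {n : ℕ} (S : Fin n → H →L[ℂ] H)
    (hS : ∀ i j, (ContinuousLinearMap.adjoint (S i)) ∘L (S j) =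
      if i = j then (1 : H →L[ℂ] H) else 0)
    (x z : H) (hz : ‖z‖ = 1)
    (hzS : z ∈ (Submodule.span ℂ
      {v : H | ∃ w : List (Fin n), v = ((w.map S).prod) x}).topologicalClosure)
    (hzperp : ∀ u ∈ (Submodule.span ℂ
      {v : H | ∃ w : List (Fin n), w ≠ [] ∧ v = ((w.map S).prod) x}).topologicalClosure,
      ⟪z, u⟫ = 0) :
    (∀ w : List (Fin n), w ≠ [] → ⟪((w.map S).prod) z, z⟫ = 0) ∧
    (∀ u v : List (Fin n), u ≠ v → ⟪((u.map S).prod) z, ((v.map S).prod) z⟫ = 0) ∧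
    Orthonormal ℂ (fun w : List (Fin n) => ((w.map S).prod) z) := by
  have cancel : ∀ (a b : Fin n) (p q : H), ⟪S a p, S b q⟫ =
      if a = b then ⟪p, q⟫ else 0 := by
    intro a b p q
    rw [← ContinuousLinearMap.adjoint_inner_right (S a),
      ← ContinuousLinearMap.comp_apply, hS a b]
    split_ifs with hab
    · simp
    · simp
  -- membership of S_v z in the closure of S₀[x]
  have mem0 : ∀ v : List (Fin n), v ≠ [] →
      ((v.map S).prod) z ∈ (Submodule.span ℂ
        {u : H | ∃ w : List (Fin n), w ≠ [] ∧ u = ((w.map S).prod) x}).topologicalClosure := by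
    intro v hv
    set T := (v.map S).prod with hT
    set N := (Submodule.span ℂ
      {u : H | ∃ w : List (Fin n), w ≠ [] ∧ u = ((w.map S).prod) x}) with hN
    have hmap : ∀ y ∈ Submodule.span ℂ
        {u : H | ∃ w : List (Fin n), u = ((w.map S).prod) x}, T y ∈ N := by
      intro y hy
      refine Submodule.span_induction ?_ ?_ ?_ ?_ hy
      · rintro u ⟨w, rfl⟩
        apply Submodule.subset_span
        refine ⟨v ++ w, by simp [hv], ?_⟩
        simp [hT, List.prod_append, ContinuousLinearMap.mul_apply]
      · simp
      · intro a b _ _ ha hb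
        simpa [map_add] using N.add_mem ha hb
      · intro c a _ ha
        simpa [map_smul] using N.smul_mem c ha
    have hclosed : IsClosed (T ⁻¹' (N.topologicalClosure : Set H)) :=
      N.isClosed_topologicalClosure.preimage T.continuous
    have hsub : (Submodule.span ℂ
        {u : H | ∃ w : List (Fin n), u = ((w.map S).prod) x} : Set H) ⊆
        T ⁻¹' (N.topologicalClosure : Set H) :=
      fun y hy => N.le_topologicalClosure (hmap y hy)
    have hz' : z ∈ closure (Submodule.span ℂ
        {u : H | ∃ w : List (Fin n), u = ((w.map S).prod) x} : Set H) := hzS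
    exact closure_minimal hsub hclosed hz'
  have key : ∀ u v : List (Fin n), u ≠ v →
      ⟪((u.map S).prod) z, ((v.map S).prod) z⟫ = 0 := by
    intro u
    induction u with
    | nil =>
      intro v hv
      simp only [List.map_nil, List.prod_nil, ContinuousLinearMap.one_apply]
      exact hzperp _ (mem0 v (Ne.symm hv))
    | cons a u ih =>
      intro v hv
      cases v with
      | nil =>
        have h1 : ⟪z, (((a :: u).map S).prod) z⟫ = 0 :=
          hzperp _ (mem0 (a :: u) (by simp))
        simp only [List.map_nil, List.prod_nil, ContinuousLinearMap.one_apply]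
        rw [← inner_conj_symm, h1, map_zero]
      | cons b v =>
        simp only [List.map_cons, List.prod_cons, ContinuousLinearMap.mul_apply]
        rw [cancel]
        by_cases hab : a = b
        · subst hab
          simp only [if_pos rfl]
          exact ih v (fun h => hv (by rw [h]))
        · simp [hab]
  have normkey : ∀ w : List (Fin n),
      ⟪((w.map S).prod) z, ((w.map S).prod) z⟫ = ⟪z, z⟫ := by
    intro w
    induction w with
    | nil => simp
    | cons a w ih =>
      simp only [List.map_cons, List.prod_cons, ContinuousLinearMap.mul_apply]
      rw [cancel, if_pos rfl, ih]
  refine ⟨fun w hw => by simpa using key w [] hw, key, ?_⟩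
  rw [orthonormal_iff_ite]
  intro u v
  by_cases huv : u = v
  · subst huv
    rw [if_pos rfl, normkey, inner_self_eq_norm_sq_to_K, hz]
    norm_num
  · rw [if_neg huv]
    exact key u v huv
end
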